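/- The Ligon-Schaaf map preserves angular momentum: with A, B as above and (x,y) = (A sinθ + B cosθ, -ν A cosθ + ν B sinθ) for any θ, the spatial parts satisfy x̃ × ỹ = q × p, where x̃, ỹ in R³ are the first three components of x, y. -/

import Mathlib

open Finset Matrix

/-- The Ligon-Schaaf map preserves angular momentum: the spatial parts of
`x = A sinθ + B cosθ`, `y = -νA cosθ + νB sinθ` satisfy `x̃ × ỹ = q × p`. -/
theorem stmt12 (q p : Fin 3 → ℝ) (hq : q ≠ 0) (μ H ν θ : ℝ) (hμ : 0 < μ)
    (hH : H = (∑ i, p i ^ 2) / (2 * μ) - 1 / Real.sqrt (∑ i, q i ^ 2))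
    (hHneg : H < 0)
    (hν : ν = Real.sqrt (μ / (-2 * H)))
    (At Bt : Fin 3 → ℝ) (A₄ B₄ : ℝ)
    (hAt : At = fun i => q i / Real.sqrt (∑ j, q j ^ 2) - (1 / μ) * (∑ j, q j * p j) * p i)
    (hA₄ : A₄ = (1 / ν) * ∑ j, q j * p j)
    (hBt : Bt = fun i => (1 / ν) * Real.sqrt (∑ j, q j ^ 2) * p i)
    (hB₄ : B₄ = (1 / μ) * (∑ j, p j ^ 2) * Real.sqrt (∑ j, q j ^ 2) - 1)
    (xt yt : Fin 3 → ℝ)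
    (hxt : xt = Real.sin θ • At + Real.cos θ • Bt)
    (hyt : yt = -(ν * Real.cos θ) • At + (ν * Real.sin θ) • Bt) :
    xt ⨯₃ yt = q ⨯₃ p := by
  set r := Real.sqrt (∑ i, q i ^ 2) with hr
  have hrpos : (0:ℝ) < r := by
    apply Real.sqrt_pos.2
    rcases Function.ne_iff.1 hq with ⟨i, hi⟩
    have h1 : 0 < q i ^ 2 := pow_two_pos_of_ne_zero hi
    have h2 : q i ^ 2 ≤ ∑ i, q i ^ 2 :=
      Finset.single_le_sum (f := fun j => q j ^ 2) (fun j _ => sq_nonneg _)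
        (Finset.mem_univ i)
    linarith
  have hν0 : (0:ℝ) < ν := by
    rw [hν]; apply Real.sqrt_pos.2
    apply div_pos hμ; linarith
  have hs : Real.sin θ ^ 2 + Real.cos θ ^ 2 = 1 := Real.sin_sq_add_cos_sq θ
  have hAt' : At = r⁻¹ • q - ((1 / μ) * (∑ j, q j * p j)) • p := by
    funext i; simp [hAt, smul_eq_mul]; ring
  have hBt' : Bt = ((1 / ν) * r) • p := by
    funext i; simp [hBt, smul_eq_mul]
  have key : At ⨯₃ Bt = (1 / ν) • (q ⨯₃ p) := by
    rw [hAt', hBt']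
    simp only [_root_.map_sub, _root_.map_smul, LinearMap.sub_apply, LinearMap.smul_apply,
      cross_self, smul_zero, sub_zero, smul_smul]
    congr 1
    field_simp
  have hBA : Bt ⨯₃ At = -((1 / ν) • (q ⨯₃ p)) := by
    rw [← cross_anticomm, key]
  have expand : xt ⨯₃ yt =
      (Real.sin θ * (ν * Real.sin θ)) • (At ⨯₃ Bt)
        + (Real.cos θ * -(ν * Real.cos θ)) • (Bt ⨯₃ At) := by
    rw [hxt, hyt]
    simp only [_root_.map_add, _root_.map_smul, _root_.map_neg, LinearMap.add_apply, LinearMap.smul_apply,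
      LinearMap.neg_apply, cross_self, smul_zero, smul_smul]
    module
  rw [expand, key, hBA, smul_neg, smul_smul, smul_smul, ← neg_smul, ← add_smul]
  have hc : Real.sin θ * (ν * Real.sin θ) * (1 / ν)
      + -(Real.cos θ * -(ν * Real.cos θ) * (1 / ν)) = 1 := by
    field_simp
    nlinarith [hs]
  rw [hc, one_smul]
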